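/- arXiv:2604.19290 — 2 statements merged into one kernel-verified Lean document; each statement's English description precedes it below -/
import Mathlib

section
/- Let λ₁, λ₂ > 0 with λ₁ ≠ λ₂, and let β₂, β₃, β₄ ∈ ℝ with β₃ ≠ 0 and β₄ ≠ 0. Define the six functions on (0, ∞): g₁(τ) = τ; g₂(τ) = (1 − e^{−λ₁τ})/λ₁; g₃(τ) = (1 − e^{−λ₁τ})/λ₁ − τe^{−λ₁τ}; g₄(τ) = (1 − e^{−λ₂τ})/λ₂ − τe^{−λ₂τ}; g₅(τ) = −(β₂+β₃)/λ₁² + ((β₂+β₃)/λ₁²)e^{−λ₁τ} + ((β₂+β₃)/λ₁)τe^{−λ₁τ} + β₃τ²e^{−λ₁τ}; g₆(τ) = −β₄/λ₂² + (β₄/λ₂²)e^{−λ₂τ} + (β₄/λ₂)τe^{−λ₂τ} + β₄τ²e^{−λ₂τ}. Then g₁, …, g₆ are linearly independent over ℝ as functions on (0, ∞). -/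
open Filter Topology

private lemma texp (μ : ℝ) (hμ : 0 < μ) (n : ℕ) :
    Tendsto (fun τ : ℝ => τ ^ n * Real.exp (-(μ * τ))) atTop (𝓝 0) := by
  have h1 : Tendsto (fun τ : ℝ => μ * τ) atTop atTop :=
    Filter.tendsto_id.const_mul_atTop hμ
  have h2 := (Real.tendsto_pow_mul_exp_neg_atTop_nhds_zero n).comp h1
  have h3 := h2.const_mul ((μ : ℝ) ^ n)⁻¹
  rw [mul_zero] at h3
  refine h3.congr fun τ => ?_
  have hμn : (μ : ℝ) ^ n ≠ 0 := pow_ne_zero _ hμ.ne'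
  field_simp [Function.comp, mul_pow]
  simp only [Function.comp_apply]; ring

private lemma tpoly (μ : ℝ) (hμ : 0 < μ) (a b c : ℝ) :
    Tendsto (fun τ : ℝ => (a + b * τ + c * τ ^ 2) * Real.exp (-(μ * τ))) atTop (𝓝 0) := by
  have h0 := (texp μ hμ 0).const_mul a
  have h1 := (texp μ hμ 1).const_mul b
  have h2 := (texp μ hμ 2).const_mul c
  have := (h0.add h1).add h2
  simp only [mul_zero, add_zero, pow_zero, pow_one, one_mul] at this
  refine this.congr fun τ => by ring

private lemma eq_zero_of_eventually_eq (c : ℝ) (G : ℝ → ℝ)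
    (hG : Tendsto G atTop (𝓝 c)) (h0 : ∀ τ : ℝ, 0 < τ → G τ = 0) : c = 0 := by
  have he : G =ᶠ[atTop] fun _ => (0 : ℝ) :=
    (eventually_gt_atTop 0).mono fun τ hτ => h0 τ hτ
  exact tendsto_nhds_unique (hG.congr' he) tendsto_const_nhds

private lemma key (μ ν : ℝ) (hμ : 0 < μ) (hν : μ < ν) (A B p₀ p₁ p₂ q₀ q₁ q₂ : ℝ)
    (h : ∀ τ : ℝ, 0 < τ → A + B * τ + (p₀ + p₁ * τ + p₂ * τ ^ 2) * Real.exp (-(μ * τ))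
        + (q₀ + q₁ * τ + q₂ * τ ^ 2) * Real.exp (-(ν * τ)) = 0) :
    A = 0 ∧ B = 0 ∧ p₀ = 0 ∧ p₁ = 0 ∧ p₂ = 0 ∧ q₀ = 0 ∧ q₁ = 0 ∧ q₂ = 0 := by
  have hν0 : 0 < ν := hμ.trans hν
  set δ := ν - μ with hδdef
  have hδ : 0 < δ := by simp only [hδdef]; linarith
  -- Step B = 0
  have hB : B = 0 := by
    refine eq_zero_of_eventually_eq B (fun τ => A * τ⁻¹ + B
      + ((p₀ + p₁ * τ + p₂ * τ ^ 2) * Real.exp (-(μ * τ))) * τ⁻¹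
      + ((q₀ + q₁ * τ + q₂ * τ ^ 2) * Real.exp (-(ν * τ))) * τ⁻¹) ?_ ?_
    · have l1 := tendsto_inv_atTop_zero.const_mul A
      have lB : Tendsto (fun _ : ℝ => B) atTop (𝓝 B) := tendsto_const_nhds
      have l2 := (tpoly μ hμ p₀ p₁ p₂).mul tendsto_inv_atTop_zero
      have l3 := (tpoly ν hν0 q₀ q₁ q₂).mul tendsto_inv_atTop_zero
      have := ((l1.add lB).add l2).add l3
      simpa using this
    · intro τ hτ
      have h0 := h τ hτ
      have hτ0 : τ ≠ 0 := hτ.ne'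
      show A * τ⁻¹ + B + ((p₀ + p₁ * τ + p₂ * τ ^ 2) * Real.exp (-(μ * τ))) * τ⁻¹
        + ((q₀ + q₁ * τ + q₂ * τ ^ 2) * Real.exp (-(ν * τ))) * τ⁻¹ = 0
      calc A * τ⁻¹ + B + ((p₀ + p₁ * τ + p₂ * τ ^ 2) * Real.exp (-(μ * τ))) * τ⁻¹
            + ((q₀ + q₁ * τ + q₂ * τ ^ 2) * Real.exp (-(ν * τ))) * τ⁻¹
          = (A + B * τ + (p₀ + p₁ * τ + p₂ * τ ^ 2) * Real.exp (-(μ * τ))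
            + (q₀ + q₁ * τ + q₂ * τ ^ 2) * Real.exp (-(ν * τ))) * τ⁻¹ := by
            field_simp
        _ = 0 := by rw [h0, zero_mul]
  -- Step A = 0
  have hA : A = 0 := by
    refine eq_zero_of_eventually_eq A (fun τ => A
      + (p₀ + p₁ * τ + p₂ * τ ^ 2) * Real.exp (-(μ * τ))
      + (q₀ + q₁ * τ + q₂ * τ ^ 2) * Real.exp (-(ν * τ))) ?_ ?_
    · have lA : Tendsto (fun _ : ℝ => A) atTop (𝓝 A) := tendsto_const_nhds
      have := (lA.add (tpoly μ hμ p₀ p₁ p₂)).add (tpoly ν hν0 q₀ q₁ q₂)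
      simpa using this
    · intro τ hτ
      have h0 := h τ hτ
      rw [hB] at h0
      show A + (p₀ + p₁ * τ + p₂ * τ ^ 2) * Real.exp (-(μ * τ))
        + (q₀ + q₁ * τ + q₂ * τ ^ 2) * Real.exp (-(ν * τ)) = 0
      linarith
  -- Reduce: P τ + Q τ * exp(-(δτ)) = 0
  have hPQ : ∀ τ : ℝ, 0 < τ → (p₀ + p₁ * τ + p₂ * τ ^ 2)
      + (q₀ + q₁ * τ + q₂ * τ ^ 2) * Real.exp (-(δ * τ)) = 0 := by
    intro τ hτ
    have h0 := h τ hτ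
    rw [hA, hB] at h0
    have hexp : Real.exp (-(ν * τ)) = Real.exp (-(δ * τ)) * Real.exp (-(μ * τ)) := by
      rw [← Real.exp_add]; congr 1; rw [hδdef]; ring
    rw [hexp] at h0
    have hne := (Real.exp_pos (-(μ * τ))).ne'
    have hfac : ((p₀ + p₁ * τ + p₂ * τ ^ 2)
        + (q₀ + q₁ * τ + q₂ * τ ^ 2) * Real.exp (-(δ * τ))) * Real.exp (-(μ * τ)) = 0 := by
      linear_combination h0
    rcases mul_eq_zero.mp hfac with h' | h'
    · exact h'
    · exact absurd h' hne
  -- p₂ = 0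
  have hp₂ : p₂ = 0 := by
    refine eq_zero_of_eventually_eq p₂ (fun τ => p₀ * (τ⁻¹ * τ⁻¹) + p₁ * τ⁻¹ + p₂
      + ((q₀ + q₁ * τ + q₂ * τ ^ 2) * Real.exp (-(δ * τ))) * (τ⁻¹ * τ⁻¹)) ?_ ?_
    · have l1 := (tendsto_inv_atTop_zero.mul tendsto_inv_atTop_zero).const_mul p₀
      have l2 := tendsto_inv_atTop_zero.const_mul p₁
      have lp : Tendsto (fun _ : ℝ => p₂) atTop (𝓝 p₂) := tendsto_const_nhds
      have l3 := (tpoly δ hδ q₀ q₁ q₂).mul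
        (tendsto_inv_atTop_zero.mul tendsto_inv_atTop_zero)
      have := ((l1.add l2).add lp).add l3
      simpa using this
    · intro τ hτ
      have h0 := hPQ τ hτ
      have hτ0 : τ ≠ 0 := hτ.ne'
      show p₀ * (τ⁻¹ * τ⁻¹) + p₁ * τ⁻¹ + p₂
        + ((q₀ + q₁ * τ + q₂ * τ ^ 2) * Real.exp (-(δ * τ))) * (τ⁻¹ * τ⁻¹) = 0
      calc p₀ * (τ⁻¹ * τ⁻¹) + p₁ * τ⁻¹ + p₂
            + ((q₀ + q₁ * τ + q₂ * τ ^ 2) * Real.exp (-(δ * τ))) * (τ⁻¹ * τ⁻¹)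
          = (p₀ + p₁ * τ + p₂ * τ ^ 2
            + (q₀ + q₁ * τ + q₂ * τ ^ 2) * Real.exp (-(δ * τ))) * (τ⁻¹ * τ⁻¹) := by
            field_simp
        _ = 0 := by rw [h0, zero_mul]
  -- p₁ = 0
  have hp₁ : p₁ = 0 := by
    refine eq_zero_of_eventually_eq p₁ (fun τ => p₀ * τ⁻¹ + p₁
      + ((q₀ + q₁ * τ + q₂ * τ ^ 2) * Real.exp (-(δ * τ))) * τ⁻¹) ?_ ?_
    · have l1 := tendsto_inv_atTop_zero.const_mul p₀
      have lp : Tendsto (fun _ : ℝ => p₁) atTop (𝓝 p₁) := tendsto_const_nhds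
      have l3 := (tpoly δ hδ q₀ q₁ q₂).mul tendsto_inv_atTop_zero
      have := (l1.add lp).add l3
      simpa using this
    · intro τ hτ
      have h0 := hPQ τ hτ
      rw [hp₂] at h0
      have hτ0 : τ ≠ 0 := hτ.ne'
      show p₀ * τ⁻¹ + p₁
        + ((q₀ + q₁ * τ + q₂ * τ ^ 2) * Real.exp (-(δ * τ))) * τ⁻¹ = 0
      calc p₀ * τ⁻¹ + p₁ + ((q₀ + q₁ * τ + q₂ * τ ^ 2) * Real.exp (-(δ * τ))) * τ⁻¹
          = (p₀ + p₁ * τ + 0 * τ ^ 2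
            + (q₀ + q₁ * τ + q₂ * τ ^ 2) * Real.exp (-(δ * τ))) * τ⁻¹ := by
            field_simp; ring
        _ = 0 := by rw [h0, zero_mul]
  -- p₀ = 0
  have hp₀ : p₀ = 0 := by
    refine eq_zero_of_eventually_eq p₀ (fun τ => p₀
      + (q₀ + q₁ * τ + q₂ * τ ^ 2) * Real.exp (-(δ * τ))) ?_ ?_
    · have lp : Tendsto (fun _ : ℝ => p₀) atTop (𝓝 p₀) := tendsto_const_nhds
      have := lp.add (tpoly δ hδ q₀ q₁ q₂)
      simpa using this
    · intro τ hτ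
      have h0 := hPQ τ hτ
      rw [hp₂, hp₁] at h0
      show p₀ + (q₀ + q₁ * τ + q₂ * τ ^ 2) * Real.exp (-(δ * τ)) = 0
      linarith
  -- Q ≡ 0 on (0,∞)
  have hQ : ∀ τ : ℝ, 0 < τ → q₀ + q₁ * τ + q₂ * τ ^ 2 = 0 := by
    intro τ hτ
    have h0 := hPQ τ hτ
    rw [hp₂, hp₁, hp₀] at h0
    have hne := (Real.exp_pos (-(δ * τ))).ne'
    have hfac : (q₀ + q₁ * τ + q₂ * τ ^ 2) * Real.exp (-(δ * τ)) = 0 := by linarith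
    rcases mul_eq_zero.mp hfac with h' | h'
    · exact h'
    · exact absurd h' hne
  have e1 := hQ 1 one_pos
  have e2 := hQ 2 two_pos
  have e3 := hQ 3 three_pos
  norm_num at e1 e2 e3
  refine ⟨hA, hB, hp₀, hp₁, hp₂, by linarith, by linarith, by linarith⟩

private lemma key' (μ ν : ℝ) (hμ : 0 < μ) (hν : 0 < ν) (hne : μ ≠ ν)
    (A B p₀ p₁ p₂ q₀ q₁ q₂ : ℝ)
    (h : ∀ τ : ℝ, 0 < τ → A + B * τ + (p₀ + p₁ * τ + p₂ * τ ^ 2) * Real.exp (-(μ * τ))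
        + (q₀ + q₁ * τ + q₂ * τ ^ 2) * Real.exp (-(ν * τ)) = 0) :
    A = 0 ∧ B = 0 ∧ p₀ = 0 ∧ p₁ = 0 ∧ p₂ = 0 ∧ q₀ = 0 ∧ q₁ = 0 ∧ q₂ = 0 := by
  rcases hne.lt_or_gt with hlt | hlt
  · exact key μ ν hμ hlt A B p₀ p₁ p₂ q₀ q₁ q₂ h
  · obtain ⟨hA, hB, hq₀, hq₁, hq₂, hp₀, hp₁, hp₂⟩ :=
      key ν μ hν hlt A B q₀ q₁ q₂ p₀ p₁ p₂ (fun τ hτ => by linear_combination h τ hτ)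
    exact ⟨hA, hB, hp₀, hp₁, hp₂, hq₀, hq₁, hq₂⟩

/-- The six maturity-scaled NSS sensitivity functions are linearly
independent on `(0, ∞)` when `λ₁ ≠ λ₂`, `β₃ ≠ 0`, and `β₄ ≠ 0`. -/
theorem stmt12
    (lam₁ lam₂ : ℝ) (hlam₁ : 0 < lam₁) (hlam₂ : 0 < lam₂) (hne : lam₁ ≠ lam₂)
    (β₂ β₃ β₄ : ℝ) (hβ₃ : β₃ ≠ 0) (hβ₄ : β₄ ≠ 0)
    (g₁ g₂ g₃ g₄ g₅ g₆ : ℝ → ℝ)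
    (hg₁ : ∀ τ : ℝ, 0 < τ → g₁ τ = τ)
    (hg₂ : ∀ τ : ℝ, 0 < τ → g₂ τ = (1 - Real.exp (-lam₁ * τ)) / lam₁)
    (hg₃ : ∀ τ : ℝ, 0 < τ →
      g₃ τ = (1 - Real.exp (-lam₁ * τ)) / lam₁ - τ * Real.exp (-lam₁ * τ))
    (hg₄ : ∀ τ : ℝ, 0 < τ →
      g₄ τ = (1 - Real.exp (-lam₂ * τ)) / lam₂ - τ * Real.exp (-lam₂ * τ))
    (hg₅ : ∀ τ : ℝ, 0 < τ →
      g₅ τ = -(β₂ + β₃) / lam₁ ^ 2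
        + ((β₂ + β₃) / lam₁ ^ 2) * Real.exp (-lam₁ * τ)
        + ((β₂ + β₃) / lam₁) * (τ * Real.exp (-lam₁ * τ))
        + β₃ * (τ ^ 2 * Real.exp (-lam₁ * τ)))
    (hg₆ : ∀ τ : ℝ, 0 < τ →
      g₆ τ = -β₄ / lam₂ ^ 2
        + (β₄ / lam₂ ^ 2) * Real.exp (-lam₂ * τ)
        + (β₄ / lam₂) * (τ * Real.exp (-lam₂ * τ))
        + β₄ * (τ ^ 2 * Real.exp (-lam₂ * τ)))
    (c₁ c₂ c₃ c₄ c₅ c₆ : ℝ)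
    (h : ∀ τ : ℝ, 0 < τ →
      c₁ * g₁ τ + c₂ * g₂ τ + c₃ * g₃ τ + c₄ * g₄ τ + c₅ * g₅ τ + c₆ * g₆ τ = 0) :
    c₁ = 0 ∧ c₂ = 0 ∧ c₃ = 0 ∧ c₄ = 0 ∧ c₅ = 0 ∧ c₆ = 0 := by
  have h' : ∀ τ : ℝ, 0 < τ →
      (c₂ / lam₁ + c₃ / lam₁ + c₄ / lam₂ - c₅ * (β₂ + β₃) / lam₁ ^ 2 - c₆ * β₄ / lam₂ ^ 2)
      + c₁ * τ
      + ((-(c₂ / lam₁) - c₃ / lam₁ + c₅ * (β₂ + β₃) / lam₁ ^ 2)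
        + (-c₃ + c₅ * (β₂ + β₃) / lam₁) * τ + (c₅ * β₃) * τ ^ 2) * Real.exp (-(lam₁ * τ))
      + ((-(c₄ / lam₂) + c₆ * β₄ / lam₂ ^ 2)
        + (-c₄ + c₆ * β₄ / lam₂) * τ + (c₆ * β₄) * τ ^ 2) * Real.exp (-(lam₂ * τ)) = 0 := by
    intro τ hτ
    have h0 := h τ hτ
    rw [hg₁ τ hτ, hg₂ τ hτ, hg₃ τ hτ, hg₄ τ hτ, hg₅ τ hτ, hg₆ τ hτ] at h0
    simp only [neg_mul] at h0 ⊢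
    linear_combination h0
  obtain ⟨hA, hB, hp₀, hp₁, hp₂, hq₀, hq₁, hq₂⟩ :=
    key' lam₁ lam₂ hlam₁ hlam₂ hne _ _ _ _ _ _ _ _ h'
  have hc₁ : c₁ = 0 := hB
  have hc₅ : c₅ = 0 := by
    rcases mul_eq_zero.mp hp₂ with h' | h'
    · exact h'
    · exact absurd h' hβ₃
  have hc₆ : c₆ = 0 := by
    rcases mul_eq_zero.mp hq₂ with h' | h'
    · exact h'
    · exact absurd h' hβ₄
  rw [hc₅] at hp₁ hp₀
  rw [hc₆] at hq₁ hq₀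
  have hc₃ : c₃ = 0 := by
    simp only [zero_mul, zero_div, zero_add, add_zero, neg_add_eq_zero] at hp₁
    linarith [hp₁]
  have hc₄ : c₄ = 0 := by
    simp only [zero_mul, zero_div, zero_add, add_zero] at hq₁
    linarith [hq₁]
  have hc₂ : c₂ = 0 := by
    rw [hc₃] at hp₀
    field_simp at hp₀
    exact (mul_eq_zero.mp (by linarith [hp₀] : lam₁ * c₂ = 0)).resolve_left hlam₁.ne'
  exact ⟨hc₁, hc₂, hc₃, hc₄, hc₅, hc₆⟩
end

section
/- Let T > 0 and λ₁, λ₂ > 0 with λ₁ ≠ λ₂. Then the four Nelson–Siegel–Svensson basis functions on (0, T), namely φ₁(τ) = 1, φ₂(τ) = (1 − e^{−λ₁τ})/(λ₁τ), φ₃(τ) = (1 − e^{−λ₁τ})/(λ₁τ) − e^{−λ₁τ}, and φ₄(τ) = (1 − e^{−λ₂τ})/(λ₂τ) − e^{−λ₂τ}, are linearly independent as elements of L²((0, T), ℝ): if c₁φ₁ + c₂φ₂ + c₃φ₃ + c₄φ₄ = 0 almost everywhere on (0, T) for real coefficients c₁, …, c₄, then c₁ = c₂ = c₃ = c₄ =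 0. Consequently, the 4×4 Gram matrix G_T with entries (G_T)_{ij} = ∫₀ᵀ φ_i(τ)φ_j(τ) dτ is symmetric positive definite. -/
open MeasureTheory Matrix

open Filter Real in
lemma expT {c : ℝ} (hc : 0 < c) : Tendsto (fun τ : ℝ => Real.exp (-(c*τ))) atTop (nhds 0) :=
  Real.tendsto_exp_atBot.comp (tendsto_neg_atTop_atBot.comp (tendsto_id.const_mul_atTop hc))

open Filter Real in
lemma texpT {c : ℝ} (hc : 0 < c) : Tendsto (fun τ : ℝ => τ * Real.exp (-(c*τ))) atTop (nhds 0) := by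
  have h := (tendsto_pow_mul_exp_neg_atTop_nhds_zero 1).comp (tendsto_id.const_mul_atTop (f := fun x : ℝ => x) hc)
  have h2 := h.const_mul (c⁻¹)
  rw [mul_zero] at h2
  apply h2.congr
  intro τ
  simp only [Function.comp]
  field_simp

open Filter Real in
lemma key_s16 (μ ν a₀ a₁ p q r s : ℝ) (hμ : 0 < μ) (hν : 0 < ν) (hμν : μ < ν)
    (h : ∀ τ : ℝ, a₀ + a₁*τ + (p + r*τ)*Real.exp (-(μ*τ)) + (q + s*τ)*Real.exp (-(ν*τ)) = 0) :
    a₀ = 0 ∧ a₁ = 0 ∧ p = 0 ∧ q = 0 ∧ r = 0 ∧ s = 0 := by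
  have hδ : 0 < ν - μ := by linarith
  have hexp : ∀ τ : ℝ, Real.exp (-((ν-μ)*τ)) * Real.exp (-(μ*τ)) = Real.exp (-(ν*τ)) := by
    intro τ; rw [← Real.exp_add]; ring_nf
  -- a₁ = 0
  have ha₁ : a₁ = 0 := by
    set P : ℝ → ℝ := fun τ => a₀*τ⁻¹ + a₁ + (p*τ⁻¹ + r)*Real.exp (-(μ*τ)) + (q*τ⁻¹ + s)*Real.exp (-(ν*τ)) with hP
    have hlim : Tendsto P atTop (nhds (a₀*0 + a₁ + (p*0 + r)*0 + (q*0 + s)*0)) := by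
      apply Tendsto.add
      apply Tendsto.add
      apply Tendsto.add
      · exact tendsto_inv_atTop_zero.const_mul a₀
      · exact tendsto_const_nhds
      · exact ((tendsto_inv_atTop_zero.const_mul p).add tendsto_const_nhds).mul (expT hμ)
      · exact ((tendsto_inv_atTop_zero.const_mul q).add tendsto_const_nhds).mul (expT hν)
    have hzero : ∀ τ : ℝ, τ ≠ 0 → P τ = 0 := by
      intro τ hτ
      have h2 : P τ * τ = 0 := by
        have e1 : P τ * τ = a₀ + a₁*τ + (p + r*τ)*Real.exp (-(μ*τ)) + (q + s*τ)*Real.exp (-(ν*τ)) := by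
          simp only [hP]; linear_combination (a₀ + p*Real.exp (-(μ*τ)) + q*Real.exp (-(ν*τ))) * mul_inv_cancel₀ hτ
        rw [e1, h τ]
      exact (mul_eq_zero.mp h2).resolve_right hτ
    have hlim0 : Tendsto P atTop (nhds 0) := by
      apply Tendsto.congr' _ (tendsto_const_nhds : Filter.Tendsto (fun _ : ℝ => (0:ℝ)) atTop (nhds 0))
      filter_upwards [eventually_ne_atTop (0:ℝ)] with τ hτ
      exact (hzero τ hτ).symm
    have := tendsto_nhds_unique hlim hlim0
    linarith [this]
  -- a₀ = 0
  have ha₀ : a₀ = 0 := by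
    set W : ℝ → ℝ := fun τ => a₀ + (p*Real.exp (-(μ*τ)) + r*(τ*Real.exp (-(μ*τ)))) + (q*Real.exp (-(ν*τ)) + s*(τ*Real.exp (-(ν*τ)))) with hW
    have hlim : Tendsto W atTop (nhds (a₀ + (p*0 + r*0) + (q*0 + s*0))) := by
      apply Tendsto.add
      apply Tendsto.add
      · exact tendsto_const_nhds
      · exact ((expT hμ).const_mul p).add ((texpT hμ).const_mul r)
      · exact ((expT hν).const_mul q).add ((texpT hν).const_mul s)
    have hzero : ∀ τ : ℝ, W τ = 0 := by
      intro τ; have := h τ; rw [ha₁] at this; simp only [hW]; linear_combination this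
    have hlim0 : Tendsto W atTop (nhds 0) := by
      have hWe : W = fun _ => (0:ℝ) := funext hzero
      rw [hWe]; exact tendsto_const_nhds
    have := tendsto_nhds_unique hlim hlim0
    linarith [this]
  -- r = 0
  have hr : r = 0 := by
    set P : ℝ → ℝ := fun τ => p*τ⁻¹ + r + (q*τ⁻¹ + s)*Real.exp (-((ν-μ)*τ)) with hP
    have hlim : Tendsto P atTop (nhds (p*0 + r + (q*0 + s)*0)) := by
      apply Tendsto.add
      apply Tendsto.add
      · exact tendsto_inv_atTop_zero.const_mul p
      · exact tendsto_const_nhds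
      · exact ((tendsto_inv_atTop_zero.const_mul q).add tendsto_const_nhds).mul (expT hδ)
    have hzero : ∀ τ : ℝ, τ ≠ 0 → P τ = 0 := by
      intro τ hτ
      have h2 : P τ * (τ * Real.exp (-(μ*τ))) = 0 := by
        have e1 : P τ * (τ * Real.exp (-(μ*τ)))
            = p*Real.exp (-(μ*τ)) + r*τ*Real.exp (-(μ*τ))
              + (q + s*τ)*(Real.exp (-((ν-μ)*τ)) * Real.exp (-(μ*τ))) := by
          simp only [hP]; linear_combination (p + q*Real.exp (-((ν-μ)*τ))) * Real.exp (-(μ*τ)) * mul_inv_cancel₀ hτ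
        rw [e1, hexp τ]
        have := h τ; rw [ha₀, ha₁] at this; linear_combination this
      exact (mul_eq_zero.mp h2).resolve_right (mul_ne_zero hτ (Real.exp_ne_zero _))
    have hlim0 : Tendsto P atTop (nhds 0) := by
      apply Tendsto.congr' _ (tendsto_const_nhds : Filter.Tendsto (fun _ : ℝ => (0:ℝ)) atTop (nhds 0))
      filter_upwards [eventually_ne_atTop (0:ℝ)] with τ hτ
      exact (hzero τ hτ).symm
    have := tendsto_nhds_unique hlim hlim0
    linarith [this]
  -- p = 0
  have hp : p = 0 := by
    set W : ℝ → ℝ := fun τ => p + (q*Real.exp (-((ν-μ)*τ)) + s*(τ*Real.exp (-((ν-μ)*τ)))) with hW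
    have hlim : Tendsto W atTop (nhds (p + (q*0 + s*0))) := by
      apply Tendsto.add
      · exact tendsto_const_nhds
      · exact ((expT hδ).const_mul q).add ((texpT hδ).const_mul s)
    have hzero : ∀ τ : ℝ, W τ = 0 := by
      intro τ
      have h2 : W τ * Real.exp (-(μ*τ)) = 0 := by
        have e1 : W τ * Real.exp (-(μ*τ))
            = p*Real.exp (-(μ*τ)) + (q + s*τ)*(Real.exp (-((ν-μ)*τ)) * Real.exp (-(μ*τ))) := by
          simp only [hW]; ring
        rw [e1, hexp τ]
        have := h τ; rw [ha₀, ha₁, hr] at this; linear_combination this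
      exact (mul_eq_zero.mp h2).resolve_right (Real.exp_ne_zero _)
    have hlim0 : Tendsto W atTop (nhds 0) := by
      have hWe : W = fun _ => (0:ℝ) := funext hzero
      rw [hWe]; exact tendsto_const_nhds
    have := tendsto_nhds_unique hlim hlim0
    linarith [this]
  -- q, s
  have hqs : ∀ τ : ℝ, q + s*τ = 0 := by
    intro τ
    have := h τ; rw [ha₀, ha₁, hr, hp] at this
    have h2 : (q + s*τ) * Real.exp (-(ν*τ)) = 0 := by linear_combination this
    exact (mul_eq_zero.mp h2).resolve_right (Real.exp_ne_zero _)
  have hq : q = 0 := by have := hqs 0; linarith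
  have hs : s = 0 := by have := hqs 1; linarith
  exact ⟨ha₀, ha₁, hp, hq, hr, hs⟩

open Filter Real in
lemma indep (T lam₁ lam₂ : ℝ) (hT : 0 < T) (h₁ : 0 < lam₁) (h₂ : 0 < lam₂)
    (hne : lam₁ ≠ lam₂) (a b d e : ℝ)
    (hae : ∀ᵐ τ ∂(volume.restrict (Set.Ioo (0:ℝ) T)),
      a + b * ((1 - Real.exp (-lam₁*τ))/(lam₁*τ))
        + d * ((1 - Real.exp (-lam₁*τ))/(lam₁*τ) - Real.exp (-lam₁*τ))
        + e * ((1 - Real.exp (-lam₂*τ))/(lam₂*τ) - Real.exp (-lam₂*τ)) = 0) :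
    a = 0 ∧ b = 0 ∧ d = 0 ∧ e = 0 := by
  set F : ℝ → ℝ := fun τ => a*τ + ((b+d)/lam₁)*(1 - Real.exp (-(lam₁*τ)))
      + (e/lam₂)*(1 - Real.exp (-(lam₂*τ)))
      - d*(τ*Real.exp (-(lam₁*τ))) - e*(τ*Real.exp (-(lam₂*τ))) with hF
  have hFa : AnalyticOnNhd ℝ F Set.univ := by
    intro x _
    have hexp : ∀ c : ℝ, AnalyticAt ℝ (fun τ : ℝ => Real.exp (-(c*τ))) x := by
      intro c
      have h0 : AnalyticAt ℝ (fun τ : ℝ => -(c*τ)) x :=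
        (analyticAt_const.mul analyticAt_id).neg
      have := analyticAt_rexp.comp h0
      simpa [Function.comp_def] using this
    exact ((((analyticAt_const.mul analyticAt_id).add
        (analyticAt_const.mul (analyticAt_const.sub (hexp lam₁)))).add
        (analyticAt_const.mul (analyticAt_const.sub (hexp lam₂)))).sub
        (analyticAt_const.mul (analyticAt_id.mul (hexp lam₁)))).sub
        (analyticAt_const.mul (analyticAt_id.mul (hexp lam₂)))
  have haeF : ∀ᵐ τ ∂(volume.restrict (Set.Ioo (0:ℝ) T)), F τ = 0 := by
    filter_upwards [hae, ae_restrict_mem measurableSet_Ioo] with τ hτ hmem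
    have hτ0 : (0:ℝ) < τ := hmem.1
    have hl1 : lam₁*τ ≠ 0 := (mul_pos h₁ hτ0).ne'
    have hl2 : lam₂*τ ≠ 0 := (mul_pos h₂ hτ0).ne'
    have key_s16 : F τ = τ * (a + b * ((1 - Real.exp (-lam₁*τ))/(lam₁*τ))
        + d * ((1 - Real.exp (-lam₁*τ))/(lam₁*τ) - Real.exp (-lam₁*τ))
        + e * ((1 - Real.exp (-lam₂*τ))/(lam₂*τ) - Real.exp (-lam₂*τ))) := by
      simp only [hF]
      rw [show -lam₁*τ = -(lam₁*τ) by ring, show -lam₂*τ = -(lam₂*τ) by ring]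
      field_simp
      ring
    rw [key_s16, hτ, mul_zero]
  have hTmem : T/2 ∈ Set.Ioo (0:ℝ) T := by constructor <;> linarith
  have hfreq : ∃ᶠ z in nhdsWithin (T/2) {(T/2)}ᶜ, F z = 0 := by
    by_contra hcon
    rw [Filter.not_frequently] at hcon
    rw [eventually_nhdsWithin_iff] at hcon
    rw [Metric.eventually_nhds_iff] at hcon
    obtain ⟨ε, hε, hball⟩ := hcon
    set δ := min ε (T/2) with hδdef
    have hδ : 0 < δ := lt_min hε (by linarith)
    have hsub : Set.Ioo (T/2) (T/2 + δ) ⊆ {τ | ¬ (τ ∈ Set.Ioo (0:ℝ) T → F τ = 0)} := by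
      intro y hy
      have hy1 : T/2 < y := hy.1
      have hy2 : y < T/2 + δ := hy.2
      have hδ1 : δ ≤ ε := min_le_left _ _
      have hδ2 : δ ≤ T/2 := min_le_right _ _
      have hymem : y ∈ Set.Ioo (0:ℝ) T := by constructor <;> [linarith; linarith]
      have hdist : dist y (T/2) < ε := by
        rw [Real.dist_eq, abs_of_pos (by linarith)]; linarith
      have hne' : F y ≠ 0 := hball hdist (by simp; intro hcontra; rw [hcontra] at hy1; linarith)
      simp only [Set.mem_setOf_eq]
      intro hcontra
      exact hne' (hcontra hymem)
    have hnull : volume {τ | ¬ (τ ∈ Set.Ioo (0:ℝ) T → F τ = 0)} = 0 := by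
      have := (ae_restrict_iff' measurableSet_Ioo).mp haeF
      rw [MeasureTheory.ae_iff] at this
      exact this
    have := measure_mono_null hsub hnull
    rw [Real.volume_Ioo] at this
    simp only [add_sub_cancel_left] at this
    rw [ENNReal.ofReal_eq_zero] at this
    linarith
  have hF0 : ∀ τ : ℝ, F τ = 0 := by
    intro τ
    exact hFa.eqOn_zero_of_preconnected_of_frequently_eq_zero isPreconnected_univ
      (Set.mem_univ (T/2)) hfreq (Set.mem_univ τ)
  rcases lt_or_gt_of_ne hne with h12 | h21
  · obtain ⟨hS, ha, hp, hq, hr, hs⟩ := key_s16 lam₁ lam₂ ((b+d)/lam₁ + e/lam₂) a (-((b+d)/lam₁)) (-(e/lam₂))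
      (-d) (-e) h₁ h₂ h12 (fun τ => by have := hF0 τ; simp only [hF] at this; linear_combination this)
    have hd : d = 0 := by linarith
    have he : e = 0 := by linarith
    have hb : b = 0 := by
      have : (b+d)/lam₁ = 0 := by linarith
      rw [div_eq_zero_iff] at this
      rcases this with h | h
      · linarith
      · exact absurd h h₁.ne'
    exact ⟨ha, hb, hd, he⟩
  · obtain ⟨hS, ha, hp, hq, hr, hs⟩ := key_s16 lam₂ lam₁ ((b+d)/lam₁ + e/lam₂) a (-(e/lam₂)) (-((b+d)/lam₁))
      (-e) (-d) h₂ h₁ h21 (fun τ => by have := hF0 τ; simp only [hF] at this; linear_combination this)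
    have hd : d = 0 := by linarith
    have he : e = 0 := by linarith
    have hb : b = 0 := by
      have : (b+d)/lam₁ = 0 := by linarith
      rw [div_eq_zero_iff] at this
      rcases this with h | h
      · linarith
      · exact absurd h h₁.ne'
    exact ⟨ha, hb, hd, he⟩

/-- For `λ₁ ≠ λ₂`, the four NSS basis functions are linearly
independent in `L²((0,T))` (a vanishing a.e. linear combination has zero
coefficients), and consequently their Gram matrix is symmetric positive
definite. -/
theorem stmt16
    (T lam₁ lam₂ : ℝ) (hT : 0 < T)
    (h₁ : 0 < lam₁) (h₂ : 0 < lam₂) (hne : lam₁ ≠ lam₂)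
    (φ : Fin 4 → ℝ → ℝ)
    (hφ0 : ∀ τ : ℝ, φ 0 τ = 1)
    (hφ1 : ∀ τ : ℝ, φ 1 τ = (1 - Real.exp (-lam₁ * τ)) / (lam₁ * τ))
    (hφ2 : ∀ τ : ℝ,
      φ 2 τ = (1 - Real.exp (-lam₁ * τ)) / (lam₁ * τ) - Real.exp (-lam₁ * τ))
    (hφ3 : ∀ τ : ℝ,
      φ 3 τ = (1 - Real.exp (-lam₂ * τ)) / (lam₂ * τ) - Real.exp (-lam₂ * τ))
    (G : Matrix (Fin 4) (Fin 4) ℝ)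
    (hG : ∀ i j : Fin 4, G i j = ∫ τ in Set.Ioo (0 : ℝ) T, φ i τ * φ j τ) :
    (∀ c : Fin 4 → ℝ,
      (∀ᵐ τ ∂(volume.restrict (Set.Ioo (0 : ℝ) T)),
        ∑ i : Fin 4, c i * φ i τ = 0) → ∀ i : Fin 4, c i = 0) ∧
    G.IsSymm ∧ G.PosDef := by
  have part1 : ∀ c : Fin 4 → ℝ,
      (∀ᵐ τ ∂(volume.restrict (Set.Ioo (0 : ℝ) T)),
        ∑ i : Fin 4, c i * φ i τ = 0) → ∀ i : Fin 4, c i = 0 := by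
    intro c hc
    have hae : ∀ᵐ τ ∂(volume.restrict (Set.Ioo (0:ℝ) T)),
        c 0 + c 1 * ((1 - Real.exp (-lam₁*τ))/(lam₁*τ))
          + c 2 * ((1 - Real.exp (-lam₁*τ))/(lam₁*τ) - Real.exp (-lam₁*τ))
          + c 3 * ((1 - Real.exp (-lam₂*τ))/(lam₂*τ) - Real.exp (-lam₂*τ)) = 0 := by
      filter_upwards [hc] with τ hτ
      rw [Fin.sum_univ_four, hφ0, hφ1, hφ2, hφ3] at hτ
      linear_combination hτ
    obtain ⟨ha, hb, hd, he⟩ := indep T lam₁ lam₂ hT h₁ h₂ hne (c 0) (c 1) (c 2) (c 3) hae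
    intro i; fin_cases i <;> assumption
  have hsymm : G.IsSymm := by
    rw [Matrix.IsSymm]
    ext i j
    rw [Matrix.transpose_apply, hG, hG]
    congr 1; funext τ; ring
  -- continuity
  have hcont : ∀ i : Fin 4, ContinuousOn (φ i) (Set.Ioo (0:ℝ) T) := by
    have hden : ∀ lam : ℝ, 0 < lam → ∀ τ ∈ Set.Ioo (0:ℝ) T, lam * τ ≠ 0 :=
      fun lam hl τ hτ => (mul_pos hl hτ.1).ne'
    have hbase : ∀ lam : ℝ, 0 < lam →
        ContinuousOn (fun τ : ℝ => (1 - Real.exp (-lam*τ))/(lam*τ)) (Set.Ioo (0:ℝ) T) := by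
      intro lam hl
      exact ContinuousOn.div
        ((continuous_const.sub ((Real.continuous_exp.comp (continuous_const.mul continuous_id)))).continuousOn)
        ((continuous_const.mul continuous_id).continuousOn)
        (hden lam hl)
    have hexpc : ∀ lam : ℝ, ContinuousOn (fun τ : ℝ => Real.exp (-lam*τ)) (Set.Ioo (0:ℝ) T) :=
      fun lam => (Real.continuous_exp.comp (continuous_const.mul continuous_id)).continuousOn
    intro i
    fin_cases i
    · exact continuousOn_const.congr (fun τ _ => hφ0 τ)
    · exact (hbase lam₁ h₁).congr (fun τ _ => hφ1 τ)
    · exact ((hbase lam₁ h₁).sub (hexpc lam₁)).congr (fun τ _ => hφ2 τ)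
    · exact ((hbase lam₂ h₂).sub (hexpc lam₂)).congr (fun τ _ => hφ3 τ)
  -- bound
  have hbound : ∀ i : Fin 4, ∀ τ ∈ Set.Ioo (0:ℝ) T, |φ i τ| ≤ 2 := by
    have key1 : ∀ lam τ : ℝ, 0 < lam → 0 < τ → |(1 - Real.exp (-lam*τ))/(lam*τ)| ≤ 1 := by
      intro lam τ hl hτ
      have hx : 0 < lam * τ := mul_pos hl hτ
      have he1 : Real.exp (-lam*τ) ≤ 1 := by
        rw [show -lam*τ = -(lam*τ) by ring]
        calc Real.exp (-(lam*τ)) ≤ Real.exp 0 := Real.exp_le_exp.mpr (by linarith)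
          _ = 1 := Real.exp_zero
      have he2 : 1 - Real.exp (-lam*τ) ≤ lam * τ := by
        have := Real.add_one_le_exp (-(lam*τ))
        rw [show -lam*τ = -(lam*τ) by ring]
        linarith
      rw [abs_of_nonneg (div_nonneg (by linarith) hx.le)]
      rw [div_le_one hx]
      exact he2
    have key2 : ∀ lam τ : ℝ, 0 < lam → 0 < τ → |Real.exp (-lam*τ)| ≤ 1 := by
      intro lam τ hl hτ
      rw [abs_of_pos (Real.exp_pos _), show -lam*τ = -(lam*τ) by ring]
      calc Real.exp (-(lam*τ)) ≤ Real.exp 0 :=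
            Real.exp_le_exp.mpr (by nlinarith)
        _ = 1 := Real.exp_zero
    intro i τ hτ
    have hτ0 : (0:ℝ) < τ := hτ.1
    fin_cases i
    · show |φ 0 τ| ≤ 2
      rw [hφ0]; norm_num
    · show |φ 1 τ| ≤ 2
      rw [hφ1]; linarith [key1 lam₁ τ h₁ hτ0]
    · show |φ 2 τ| ≤ 2
      rw [hφ2]
      calc |(1 - Real.exp (-lam₁*τ))/(lam₁*τ) - Real.exp (-lam₁*τ)|
          ≤ |(1 - Real.exp (-lam₁*τ))/(lam₁*τ)| + |Real.exp (-lam₁*τ)| := abs_sub _ _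
        _ ≤ 2 := by linarith [key1 lam₁ τ h₁ hτ0, key2 lam₁ τ h₁ hτ0]
    · show |φ 3 τ| ≤ 2
      rw [hφ3]
      calc |(1 - Real.exp (-lam₂*τ))/(lam₂*τ) - Real.exp (-lam₂*τ)|
          ≤ |(1 - Real.exp (-lam₂*τ))/(lam₂*τ)| + |Real.exp (-lam₂*τ)| := abs_sub _ _
        _ ≤ 2 := by linarith [key1 lam₂ τ h₂ hτ0, key2 lam₂ τ h₂ hτ0]
  -- integrability of products
  have hInt : ∀ i j : Fin 4,
      Integrable (fun τ => φ i τ * φ j τ) (volume.restrict (Set.Ioo (0:ℝ) T)) := by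
    intro i j
    have hc4 : Integrable (fun _ : ℝ => (4:ℝ)) (volume.restrict (Set.Ioo (0:ℝ) T)) :=
      integrableOn_const (by rw [Real.volume_Ioo]; exact ENNReal.ofReal_ne_top)
    apply hc4.mono'
    · exact ((hcont i).aestronglyMeasurable measurableSet_Ioo).mul
        ((hcont j).aestronglyMeasurable measurableSet_Ioo)
    · filter_upwards [ae_restrict_mem measurableSet_Ioo] with τ hτ
      rw [Real.norm_eq_abs, abs_mul]
      calc |φ i τ| * |φ j τ| ≤ 2 * 2 :=
            mul_le_mul (hbound i τ hτ) (hbound j τ hτ) (abs_nonneg _) (by norm_num)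
        _ = 4 := by norm_num
  have hIntc : ∀ (x : Fin 4 → ℝ) (i j : Fin 4),
      Integrable (fun τ => (x i * φ i τ) * (x j * φ j τ))
        (volume.restrict (Set.Ioo (0:ℝ) T)) := by
    intro x i j
    have : (fun τ => (x i * φ i τ) * (x j * φ j τ))
        = fun τ => (x i * x j) * (φ i τ * φ j τ) := by funext τ; ring
    rw [this]
    exact (hInt i j).const_mul _
  refine ⟨part1, hsymm, Matrix.PosDef.of_dotProduct_mulVec_pos ?_ ?_⟩
  · -- IsHermitian
    rw [Matrix.IsHermitian]
    ext i j
    rw [Matrix.conjTranspose_apply, hG, hG, star_trivial]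
    congr 1; funext τ; ring
  · -- quadratic form positive
    intro x hx
    have hstar : star x = x := by funext i; simp
    rw [hstar]
    have hq : x ⬝ᵥ G *ᵥ x
        = ∫ τ in Set.Ioo (0:ℝ) T, (∑ i : Fin 4, x i * φ i τ)^2 := by
      have h1 : ∀ i j : Fin 4, x i * G i j * x j
          = ∫ τ in Set.Ioo (0:ℝ) T, (x i * φ i τ) * (x j * φ j τ) := by
        intro i j
        rw [hG, ← MeasureTheory.integral_const_mul, ← MeasureTheory.integral_mul_const]
        congr 1; funext τ; ring
      calc x ⬝ᵥ G *ᵥ x = ∑ i : Fin 4, ∑ j : Fin 4, x i * G i j * x j := by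
            simp [dotProduct, Matrix.mulVec, Finset.mul_sum, mul_assoc]
        _ = ∑ i : Fin 4, ∑ j : Fin 4,
              ∫ τ in Set.Ioo (0:ℝ) T, (x i * φ i τ) * (x j * φ j τ) :=
            Finset.sum_congr rfl fun i _ => Finset.sum_congr rfl fun j _ => h1 i j
        _ = ∫ τ in Set.Ioo (0:ℝ) T,
              ∑ i : Fin 4, ∑ j : Fin 4, (x i * φ i τ) * (x j * φ j τ) := by
            rw [MeasureTheory.integral_finset_sum _ (fun i _ =>
              integrable_finset_sum _ (fun j _ => hIntc x i j))]
            exact Finset.sum_congr rfl fun i _ =>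
              (MeasureTheory.integral_finset_sum _ (fun j _ => hIntc x i j)).symm
        _ = ∫ τ in Set.Ioo (0:ℝ) T, (∑ i : Fin 4, x i * φ i τ)^2 := by
            congr 1; funext τ
            rw [sq, Finset.sum_mul_sum]
    have hnn : 0 ≤ ∫ τ in Set.Ioo (0:ℝ) T, (∑ i : Fin 4, x i * φ i τ)^2 :=
      setIntegral_nonneg measurableSet_Ioo fun τ _ => sq_nonneg _
    rcases eq_or_lt_of_le hnn with heq | hlt
    · exfalso
      have hIg : Integrable (fun τ => (∑ i : Fin 4, x i * φ i τ)^2)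
          (volume.restrict (Set.Ioo (0:ℝ) T)) := by
        have : (fun τ => (∑ i : Fin 4, x i * φ i τ)^2)
            = fun τ => ∑ i : Fin 4, ∑ j : Fin 4, (x i * φ i τ) * (x j * φ j τ) := by
          funext τ; rw [sq, Finset.sum_mul_sum]
        rw [this]
        exact integrable_finset_sum _ fun i _ =>
          integrable_finset_sum _ fun j _ => hIntc x i j
      have hz := (MeasureTheory.integral_eq_zero_iff_of_nonneg
        (fun τ => sq_nonneg _) hIg).mp heq.symm
      have hae0 : ∀ᵐ τ ∂(volume.restrict (Set.Ioo (0:ℝ) T)),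
          ∑ i : Fin 4, x i * φ i τ = 0 := by
        filter_upwards [hz] with τ hτ
        exact pow_eq_zero_iff two_ne_zero |>.mp hτ
      exact hx (funext (part1 x hae0))
    · rw [hq]; exact hlt
end
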